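/- For any positive integer m and any i ∈ {1,…,m}, f_{m,1}^i = 1, and for every n ≥ 2, f_{m,n}^i = |C_{m,n−1}| − Σ_{j=1}^{m−i} C(m−i,j)·f_{m,n−1}^j, where C(a,b) denotes the binomial coefficient. -/

import Mathlib

open SimpleGraph Finset
open scoped Classical

/-- A connected set of a graph: a nonempty vertex subset inducing a connected subgraph. -/
def IsConnSet {V : Type*} (G : SimpleGraph V) (C : Finset V) : Prop :=
  C.Nonempty ∧ (G.induce (C : Set V)).Connected

/-- `N(G)`: the number of connected sets of `G`. -/
noncomputable def numConnSets {V : Type*} (G : SimpleGraph V) : ℕ :=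
  {C : Finset V | IsConnSet G C}.ncard

/-- The cycle `C_m` on `Fin m`, labelled as in the paper: `i` is adjacent to `i'` iff
`|i − i'| = 1` or `{i, i'} = {first, last}` (0-indexed: `{0, m−1}`). -/
def cycleRow (m : ℕ) : SimpleGraph (Fin m) :=
  SimpleGraph.fromRel (fun i i' => i'.1 = i.1 + 1 ∨ (i.1 = 0 ∧ i'.1 = m - 1))

/-- `C_{m,n}`: the connected sets of `K_m×P_n` containing at least one vertex of each
column. -/
def Cmn (m n : ℕ) : Set (Finset (Fin m × Fin n)) :=
  {C | IsConnSet ((⊤ : SimpleGraph (Fin m)) □ pathGraph n) C ∧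
       ∀ j : Fin n, (C.filter (fun p => p.2 = j)).Nonempty}

/-- `C'_{m,n}`: the vertex subsets that are connected sets of `K_m×P_n` but not
connected sets of `C_m×P_n` and contain at least one vertex of each column. -/
def Cmn' (m n : ℕ) : Set (Finset (Fin m × Fin n)) :=
  {C | IsConnSet ((⊤ : SimpleGraph (Fin m)) □ pathGraph n) C ∧
       ¬ IsConnSet (cycleRow m □ pathGraph n) C ∧
       ∀ j : Fin n, (C.filter (fun p => p.2 = j)).Nonempty}

/-- `N(K_m×P_n; X)`: the number of `C ∈ C_{m,n}` with `C∩I_j = X∩I_j` for every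
column `I_j` with `X∩I_j ≠ ∅`. -/
noncomputable def Ncount (m n : ℕ) (X : Finset (Fin m × Fin n)) : ℕ :=
  {C | C ∈ Cmn m n ∧ ∀ j : Fin n,
      (X.filter (fun p => p.2 = j)).Nonempty →
      C.filter (fun p => p.2 = j) = X.filter (fun p => p.2 = j)}.ncard

/-- `N'(K_m×P_n; X)`: the number of `C ∈ C'_{m,n}` with `C∩I_j = X∩I_j` for every
column `I_j` with `X∩I_j ≠ ∅`. -/
noncomputable def N' (m n : ℕ) (X : Finset (Fin m × Fin n)) : ℕ :=
  {C | C ∈ Cmn' m n ∧ ∀ j : Fin n,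
      (X.filter (fun p => p.2 = j)).Nonempty →
      C.filter (fun p => p.2 = j) = X.filter (fun p => p.2 = j)}.ncard

/-- `f_{m,n}^i`: the number of sets in `C_{m,n}` whose intersection with the last column
equals the fixed `i`-element set `{v_{1,n},…,v_{i,n}}`. -/
noncomputable def fval (m n : ℕ) (hn : 0 < n) (i : ℕ) : ℕ :=
  {C : Finset (Fin m × Fin n) | C ∈ Cmn m n ∧
    C.filter (fun p => p.2 = (⟨n - 1, by omega⟩ : Fin n)) =
      (Finset.univ.filter (fun q : Fin m => q.1 < i)).image
        (fun q => (q, (⟨n - 1, by omega⟩ : Fin n)))}.ncard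

/-- `R` is (the vertex set of) a connected component of the subgraph of `H` induced by
`S`: `R` is a nonempty subset of `S`, `H[R]` is connected, and there is no edge of `H`
between `R` and `S \ R`. -/
def IsCompOf {W : Type*} (H : SimpleGraph W) (R S : Finset W) : Prop :=
  R ⊆ S ∧ R.Nonempty ∧ (H.induce (R : Set W)).Connected ∧
  ∀ x ∈ R, ∀ y ∈ S, y ∉ R → ¬ H.Adj x y

/-- `k(H[S])`: the number of connected components of the subgraph of `H` induced by `S`. -/
noncomputable def kcomp {W : Type*} (H : SimpleGraph W) (S : Finset W) : ℕ :=
  Nat.card (H.induce (S : Set W)).ConnectedComponent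

section core
variable {V : Type*} {G : SimpleGraph V}

def RelS (G : SimpleGraph V) (s : Finset V) (x y : V) : Prop :=
  x ∈ s ∧ y ∈ s ∧ G.Adj x y

def ConnOn (G : SimpleGraph V) (s : Finset V) : Prop :=
  ∀ x ∈ s, ∀ y ∈ s, Relation.ReflTransGen (RelS G s) x y

lemma relS_symm {s : Finset V} {x y : V} (h : RelS G s x y) : RelS G s y x :=
  ⟨h.2.1, h.1, h.2.2.symm⟩

lemma rtg_symm {s : Finset V} {x y : V} (h : Relation.ReflTransGen (RelS G s) x y) :
    Relation.ReflTransGen (RelS G s) y x := by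
  induction h with
  | refl => exact .refl
  | tail _ hbc ih => exact (Relation.ReflTransGen.single (relS_symm hbc)).trans ih

lemma rtg_mono {s t : Finset V} (hst : s ⊆ t) {x y : V}
    (h : Relation.ReflTransGen (RelS G s) x y) :
    Relation.ReflTransGen (RelS G t) x y := by
  induction h with
  | refl => exact .refl
  | tail _ hbc ih => exact ih.tail ⟨hst hbc.1, hst hbc.2.1, hbc.2.2⟩

lemma walk_rtg {C : Finset V} {a b : ↥(C : Set V)} (w : (G.induce (C : Set V)).Walk a b) :
    Relation.ReflTransGen (RelS G C) a.1 b.1 := by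
  induction w with
  | nil => exact .refl
  | @cons u v w h p ih =>
      exact Relation.ReflTransGen.head
        ⟨by exact_mod_cast u.2, by exact_mod_cast v.2, by exact h⟩ ih

lemma rtg_reachable {C : Finset V} {x y : V} (hx : x ∈ C)
    (h : Relation.ReflTransGen (RelS G C) x y) (hy : y ∈ C) :
    (G.induce (C : Set V)).Reachable ⟨x, by exact_mod_cast hx⟩ ⟨y, by exact_mod_cast hy⟩ := by
  induction h with
  | refl => exact Reachable.refl _
  | @tail b c hab hbc ih =>
      exact (ih hbc.1).trans (SimpleGraph.Adj.reachable (by exact hbc.2.2))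

lemma isConnSet_iff (G : SimpleGraph V) (C : Finset V) :
    IsConnSet G C ↔ C.Nonempty ∧ ConnOn G C := by
  constructor
  · rintro ⟨hne, hconn⟩
    refine ⟨hne, fun x hx y hy => ?_⟩
    obtain ⟨w⟩ := hconn.preconnected ⟨x, by exact_mod_cast hx⟩ ⟨y, by exact_mod_cast hy⟩
    exact walk_rtg w
  · rintro ⟨⟨x₀, hx₀⟩, h⟩
    haveI : Nonempty ↥(C : Set V) := ⟨⟨x₀, by exact_mod_cast hx₀⟩⟩
    refine ⟨⟨x₀, hx₀⟩, ⟨fun a b => ?_⟩⟩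
    obtain ⟨a, ha⟩ := a
    obtain ⟨b, hb⟩ := b
    have ha' : a ∈ C := by exact_mod_cast ha
    have hb' : b ∈ C := by exact_mod_cast hb
    exact rtg_reachable ha' (h a ha' b hb') hb'

lemma conn_union [DecidableEq V] {s t : Finset V} (hs : ConnOn G s) (ht : ConnOn G t) {x y : V}
    (hx : x ∈ s) (hy : y ∈ t) (hxy : G.Adj x y) : ConnOn G (s ∪ t) := by
  have key : ∀ u ∈ s ∪ t, Relation.ReflTransGen (RelS G (s ∪ t)) u x := by
    intro u hu
    rcases Finset.mem_union.mp hu with h | h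
    · exact rtg_mono Finset.subset_union_left (hs u h x hx)
    · exact (rtg_mono Finset.subset_union_right (ht u h y hy)).tail
        ⟨Finset.mem_union_right _ hy, Finset.mem_union_left _ hx, hxy.symm⟩
  intro u hu v hv
  exact (key u hu).trans (rtg_symm (key v hv))

lemma rtg_image {W : Type*} {H : SimpleGraph W} {s : Finset V} {t : Finset W} (f : V → W)
    (hmem : ∀ x ∈ s, f x ∈ t)
    (hadj : ∀ x ∈ s, ∀ y ∈ s, G.Adj x y → H.Adj (f x) (f y) ∨ f x = f y)
    {x y : V} (h : Relation.ReflTransGen (RelS G s) x y) :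
    Relation.ReflTransGen (RelS H t) (f x) (f y) := by
  induction h with
  | refl => exact Relation.ReflTransGen.refl
  | @tail b c _ hbc ih =>
      rcases hadj b hbc.1 c hbc.2.1 hbc.2.2 with h' | h'
      · exact ih.tail ⟨hmem b hbc.1, hmem c hbc.2.1, h'⟩
      · exact h' ▸ ih

end core

abbrev KP (m n : ℕ) : SimpleGraph (Fin m × Fin n) := (⊤ : SimpleGraph (Fin m)) □ pathGraph n

lemma KP_adj {m n : ℕ} {p q : Fin m × Fin n} :
    (KP m n).Adj p q ↔ (p.1 ≠ q.1 ∧ p.2.1 = q.2.1) ∨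
      (p.1 = q.1 ∧ (p.2.1 + 1 = q.2.1 ∨ q.2.1 + 1 = p.2.1)) := by
  show (⊤ : SimpleGraph (Fin m)).Adj p.1 q.1 ∧ p.2 = q.2 ∨
      (pathGraph n).Adj p.2 q.2 ∧ p.1 = q.1 ↔ _
  rw [pathGraph_adj, top_adj, Fin.ext_iff (a := p.2)]
  tauto

lemma ncard_setOf {α : Type*} [Fintype α] (P : α → Prop) :
    {x | P x}.ncard = (univ.filter P).card := by
  rw [Set.ncard_eq_toFinset_card', Set.toFinset_setOf]

lemma mem_Cmn_iff {m n : ℕ} {C : Finset (Fin m × Fin n)} :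
    C ∈ Cmn m n ↔ (C.Nonempty ∧ ConnOn (KP m n) C) ∧
      ∀ j : Fin n, (C.filter (fun p => p.2 = j)).Nonempty := by
  unfold Cmn
  rw [Set.mem_setOf_eq, isConnSet_iff]

/-- a set contained in a single column is a connected set (clique). -/
lemma column_conn {m n : ℕ} {s : Finset (Fin m × Fin n)} {j : Fin n}
    (hcol : ∀ p ∈ s, p.2 = j) : ConnOn (KP m n) s := by
  intro x hx y hy
  by_cases hxy : x = y
  · exact hxy ▸ Relation.ReflTransGen.refl
  · refine Relation.ReflTransGen.single ⟨hx, hy, KP_adj.mpr (Or.inl ⟨?_, ?_⟩)⟩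
    · intro h
      exact hxy (Prod.ext h ((hcol x hx).trans (hcol y hy).symm))
    · rw [hcol x hx, hcol y hy]

lemma fval_base (m i : ℕ) (hm : 0 < m) (hi : 1 ≤ i) (him : i ≤ m) :
    fval m 1 one_pos i = 1 := by
  set z : Fin 1 := (⟨1 - 1, by omega⟩ : Fin 1) with hz
  set A : Finset (Fin m × Fin 1) :=
    (Finset.univ.filter (fun q : Fin m => q.1 < i)).image (fun q => (q, z)) with hA
  have hfilt : ∀ C : Finset (Fin m × Fin 1), C.filter (fun p => p.2 = z) = C := by
    intro C
    apply Finset.filter_true_of_mem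
    intro p _
    exact Subsingleton.elim _ _
  have hAmem : A ∈ Cmn m 1 := by
    rw [mem_Cmn_iff]
    have hne : A.Nonempty := by
      refine ⟨((⟨0, hm⟩ : Fin m), z), ?_⟩
      rw [hA]
      exact Finset.mem_image_of_mem _ (Finset.mem_filter.mpr ⟨Finset.mem_univ _, hi⟩)
    refine ⟨⟨hne, column_conn (j := z) ?_⟩, fun j => ?_⟩
    · intro p hp
      rw [hA] at hp
      obtain ⟨q, _, rfl⟩ := Finset.mem_image.mp hp
      rfl
    · have : j = z := Subsingleton.elim _ _
      subst this
      rw [hfilt]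
      exact hne
  have : {C : Finset (Fin m × Fin 1) | C ∈ Cmn m 1 ∧
      C.filter (fun p => p.2 = z) = A} = {A} := by
    ext C
    simp only [Set.mem_setOf_eq, Set.mem_singleton_iff]
    constructor
    · rintro ⟨_, hC⟩
      rw [hfilt] at hC
      exact hC
    · rintro rfl
      exact ⟨hAmem, hfilt A⟩
  unfold fval
  rw [this, Set.ncard_singleton]
section counting
variable {m n : ℕ}

/-- rows of the last column -/
def rowsOf (m n : ℕ) (hn : 0 < n) (C : Finset (Fin m × Fin n)) : Finset (Fin m) :=
  (C.filter (fun p => p.2 = (⟨n - 1, by omega⟩ : Fin n))).image Prod.fst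

lemma filter_col_eq (C : Finset (Fin m × Fin n)) (l : Fin n) :
    C.filter (fun p => p.2 = l) =
      ((C.filter (fun p => p.2 = l)).image Prod.fst).image (fun a => (a, l)) := by
  ext ⟨a, j⟩
  simp only [Finset.mem_filter, Finset.mem_image, Prod.ext_iff]
  constructor
  · rintro ⟨hc, rfl⟩
    exact ⟨a, ⟨⟨a, j⟩, ⟨hc, rfl⟩, rfl⟩, rfl, rfl⟩
  · rintro ⟨b, ⟨⟨c, k⟩, ⟨hc, hk⟩, hb⟩, rfl, rfl⟩
    subst hk hb
    exact ⟨hc, rfl⟩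

lemma mem_rowsOf {hn : 0 < n} {C : Finset (Fin m × Fin n)} {a : Fin m} :
    a ∈ rowsOf m n hn C ↔ (a, (⟨n - 1, by omega⟩ : Fin n)) ∈ C := by
  unfold rowsOf
  simp only [Finset.mem_image, Finset.mem_filter]
  constructor
  · rintro ⟨⟨b, k⟩, ⟨hb, hk⟩, rfl⟩
    subst hk
    exact hb
  · intro h
    exact ⟨_, ⟨h, rfl⟩, rfl⟩

lemma rowsOf_eq_iff {hn : 0 < n} {C : Finset (Fin m × Fin n)} {B : Finset (Fin m)} :
    rowsOf m n hn C = B ↔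
      C.filter (fun p => p.2 = (⟨n - 1, by omega⟩ : Fin n)) =
        B.image (fun a => (a, (⟨n - 1, by omega⟩ : Fin n))) := by
  constructor
  · intro h
    rw [filter_col_eq C (⟨n - 1, by omega⟩ : Fin n)]
    rw [show ((C.filter (fun p => p.2 = (⟨n - 1, by omega⟩ : Fin n))).image Prod.fst) = B from h]
  · intro h
    unfold rowsOf
    rw [h, Finset.image_image]
    have : (Prod.fst ∘ fun a : Fin m => (a, (⟨n - 1, by omega⟩ : Fin n))) = id := rfl
    rw [this, Finset.image_id]

lemma fval_eq_card (i : ℕ) (hn : 0 < n) :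
    fval m n hn i = (univ.filter (fun C : Finset (Fin m × Fin n) =>
      C ∈ Cmn m n ∧ rowsOf m n hn C = univ.filter (fun a : Fin m => a.1 < i))).card := by
  unfold fval
  have hset : {C : Finset (Fin m × Fin n) | C ∈ Cmn m n ∧
      C.filter (fun p => p.2 = (⟨n - 1, by omega⟩ : Fin n)) =
        (Finset.univ.filter (fun q : Fin m => q.1 < i)).image
          (fun q => (q, (⟨n - 1, by omega⟩ : Fin n)))} =
      {C : Finset (Fin m × Fin n) | C ∈ Cmn m n ∧
        rowsOf m n hn C = univ.filter (fun a : Fin m => a.1 < i)} := by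
    ext C
    exact and_congr_right (fun _ => rowsOf_eq_iff.symm)
  rw [hset, ncard_setOf]
  congr

/-- permuting the rows -/
def mapRow (σ : Equiv.Perm (Fin m)) (C : Finset (Fin m × Fin n)) : Finset (Fin m × Fin n) :=
  C.image (Prod.map σ id)

lemma mapRow_mapRow (σ τ : Equiv.Perm (Fin m)) (C : Finset (Fin m × Fin n)) :
    mapRow σ (mapRow τ C) = mapRow (σ * τ) C := by
  unfold mapRow
  rw [Finset.image_image]
  rfl

lemma mapRow_one (C : Finset (Fin m × Fin n)) : mapRow 1 C = C := by
  unfold mapRow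
  have : (Prod.map (⇑(1 : Equiv.Perm (Fin m))) (id : Fin n → Fin n)) = id := by
    funext p
    rfl
  rw [this, Finset.image_id]

lemma mem_mapRow {σ : Equiv.Perm (Fin m)} {C : Finset (Fin m × Fin n)} {p : Fin m × Fin n} :
    p ∈ mapRow σ C ↔ (σ⁻¹ p.1, p.2) ∈ C := by
  unfold mapRow
  simp only [Finset.mem_image]
  constructor
  · rintro ⟨⟨a, j⟩, h, rfl⟩
    simpa using h
  · intro h
    refine ⟨(σ⁻¹ p.1, p.2), h, ?_⟩
    show (σ (σ⁻¹ p.1), p.2) = p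
    rw [Equiv.Perm.inv_def, Equiv.apply_symm_apply]

lemma mapRow_mem_Cmn {σ : Equiv.Perm (Fin m)} {C : Finset (Fin m × Fin n)}
    (hC : C ∈ Cmn m n) : mapRow σ C ∈ Cmn m n := by
  rw [mem_Cmn_iff] at hC ⊢
  obtain ⟨⟨hne, hconn⟩, hcols⟩ := hC
  refine ⟨⟨hne.image _, ?_⟩, fun j => ?_⟩
  · unfold mapRow
    intro x hx y hy
    rw [Finset.mem_image] at hx hy
    obtain ⟨x₀, hx₀, rfl⟩ := hx
    obtain ⟨y₀, hy₀, rfl⟩ := hy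
    refine rtg_image (Prod.map (⇑σ) id) (fun z hz => Finset.mem_image_of_mem _ hz)
      ?_ (hconn x₀ hx₀ y₀ hy₀)
    intro a _ b _ hab
    left
    rw [KP_adj] at hab ⊢
    rcases hab with ⟨h1, h2⟩ | ⟨h1, h2⟩
    · exact Or.inl ⟨fun h => h1 (σ.injective h), h2⟩
    · exact Or.inr ⟨congrArg σ h1, h2⟩
  · obtain ⟨p, hp⟩ := hcols j
    rw [Finset.mem_filter] at hp
    refine ⟨(σ p.1, p.2), Finset.mem_filter.mpr ⟨?_, hp.2⟩⟩
    rw [mem_mapRow]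
    simpa using hp.1

lemma rowsOf_mapRow (σ : Equiv.Perm (Fin m)) (hn : 0 < n) (C : Finset (Fin m × Fin n)) :
    rowsOf m n hn (mapRow σ C) = (rowsOf m n hn C).image σ := by
  ext a
  rw [mem_rowsOf, mem_mapRow]
  simp only [Finset.mem_image]
  constructor
  · intro h
    exact ⟨σ⁻¹ a, mem_rowsOf.mpr h, by simp⟩
  · rintro ⟨b, hb, rfl⟩
    simpa using mem_rowsOf.mp hb

lemma card_filter_lt (m j : ℕ) (hj : j ≤ m) :
    (univ.filter (fun a : Fin m => a.1 < j)).card = j := by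
  have : (univ.filter (fun a : Fin m => a.1 < j)).card = (Finset.range j).card := by
    refine Finset.card_bij' (fun a _ => a.1) (fun x hx => (⟨x, by
      rw [Finset.mem_range] at hx; omega⟩ : Fin m)) ?_ ?_ ?_ ?_
    · intro a ha
      rw [Finset.mem_range]
      exact (Finset.mem_filter.mp ha).2
    · intro x hx
      rw [Finset.mem_filter]
      rw [Finset.mem_range] at hx
      exact ⟨Finset.mem_univ _, hx⟩
    · intro a _
      rfl
    · intro x _
      rfl
  rw [this, Finset.card_range]

/-- the fiber over any nonempty `B` has cardinality `fval m n hn B.card`. -/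
lemma fiber_card (hn : 0 < n) (B : Finset (Fin m)) (hB : B.Nonempty) :
    (univ.filter (fun C : Finset (Fin m × Fin n) =>
      C ∈ Cmn m n ∧ rowsOf m n hn C = B)).card = fval m n hn B.card := by
  rw [fval_eq_card]
  set B₀ : Finset (Fin m) := univ.filter (fun a : Fin m => a.1 < B.card) with hB₀
  have hcard : B₀.card = B.card := card_filter_lt m B.card (by
    simpa using Finset.card_le_card (Finset.subset_univ B))
  -- a permutation mapping B₀ onto B
  have e : {x // x ∈ B₀} ≃ {x // x ∈ B} := Finset.equivOfCardEq hcard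
  set σ : Equiv.Perm (Fin m) := e.extendSubtype with hσ
  have hσB : B₀.image σ = B := by
    apply Finset.eq_of_subset_of_card_le
    · intro b hb
      rw [Finset.mem_image] at hb
      obtain ⟨a, ha, rfl⟩ := hb
      exact e.extendSubtype_mem a ha
    · rw [Finset.card_image_of_injective _ σ.injective, hcard]
  symm
  apply Finset.card_bij' (fun C _ => mapRow σ C) (fun C _ => mapRow σ⁻¹ C)
  · intro C hC
    rw [Finset.mem_filter] at hC ⊢
    obtain ⟨_, h1, h2⟩ := hC
    refine ⟨Finset.mem_univ _, mapRow_mem_Cmn h1, ?_⟩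
    rw [rowsOf_mapRow, h2, hσB]
  · intro C hC
    rw [Finset.mem_filter] at hC ⊢
    obtain ⟨_, h1, h2⟩ := hC
    refine ⟨Finset.mem_univ _, mapRow_mem_Cmn h1, ?_⟩
    rw [rowsOf_mapRow, h2, ← hσB, Finset.image_image]
    have hcomp : (⇑σ⁻¹ ∘ ⇑σ) = id := by
      funext x
      simp
    rw [hcomp, Finset.image_id]
  · intro C _
    rw [mapRow_mapRow, inv_mul_cancel, mapRow_one]
  · intro C _
    rw [mapRow_mapRow, mul_inv_cancel, mapRow_one]

end counting
lemma rowsOf_nonempty {m n : ℕ} {hn : 0 < n} {C : Finset (Fin m × Fin n)}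
    (hC : C ∈ Cmn m n) : (rowsOf m n hn C).Nonempty := by
  obtain ⟨p, hp⟩ := (mem_Cmn_iff.mp hC).2 (⟨n - 1, Nat.sub_lt hn Nat.one_pos⟩ : Fin n)
  rw [Finset.mem_filter] at hp
  refine ⟨p.1, mem_rowsOf.mpr ?_⟩
  rw [show ((p.1, (⟨n - 1, Nat.sub_lt hn Nat.one_pos⟩ : Fin n)) : Fin m × Fin n) = p from
    (Prod.ext rfl hp.2.symm), ]
  exact hp.1

lemma bad_sum (m n i : ℕ) (hi : 1 ≤ i) (him : i ≤ m) (hn : 0 < n) :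
    (univ.filter (fun C : Finset (Fin m × Fin n) => C ∈ Cmn m n ∧
      ¬ ∃ a : Fin m, a.1 < i ∧ (a, (⟨n - 1, Nat.sub_lt hn Nat.one_pos⟩ : Fin n)) ∈ C)).card
    = ∑ j ∈ Finset.Icc 1 (m - i), Nat.choose (m - i) j * fval m n hn j := by
  set l : Fin n := (⟨n - 1, Nat.sub_lt hn Nat.one_pos⟩ : Fin n)
  set above : Finset (Fin m) := univ.filter (fun a : Fin m => ¬ a.1 < i) with habove
  have habove_card : above.card = m - i := by
    rw [habove]
    have : (univ.filter (fun a : Fin m => ¬ a.1 < i)).card = (Finset.range (m - i)).card := by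
      refine Finset.card_bij' (fun a _ => a.1 - i) (fun x hx => (⟨x + i, by
        rw [Finset.mem_range] at hx; omega⟩ : Fin m)) ?_ ?_ ?_ ?_
      · intro a ha
        rw [Finset.mem_filter] at ha
        rw [Finset.mem_range]
        show a.1 - i < m - i
        have h2 := a.2
        have h3 := ha.2
        omega
      · intro x hx
        rw [Finset.mem_filter]
        rw [Finset.mem_range] at hx
        refine ⟨Finset.mem_univ _, by simp⟩
      · intro a ha
        rw [Finset.mem_filter] at ha
        apply Fin.ext
        show a.1 - i + i = a.1
        have := ha.2
        omega
      · intro x hx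
        rw [Finset.mem_range] at hx
        show x + i - i = x
        omega
    rw [this, Finset.card_range]
  -- rephrase the bad set via rowsOf
  have hbadeq : (univ.filter (fun C : Finset (Fin m × Fin n) => C ∈ Cmn m n ∧
      ¬ ∃ a : Fin m, a.1 < i ∧ (a, l) ∈ C)) =
      (univ.filter (fun C : Finset (Fin m × Fin n) => C ∈ Cmn m n ∧
        rowsOf m n hn C ⊆ above)) := by
    ext C
    simp only [Finset.mem_filter, Finset.mem_univ, true_and]
    refine and_congr_right (fun _ => ?_)
    constructor
    · intro h a ha
      rw [habove, Finset.mem_filter]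
      refine ⟨Finset.mem_univ _, fun hlt => h ⟨a, hlt, mem_rowsOf.mp ha⟩⟩
    · rintro hsub ⟨a, hlt, hmem⟩
      have := hsub (mem_rowsOf.mpr hmem)
      rw [habove, Finset.mem_filter] at this
      exact this.2 hlt
  rw [hbadeq]
  -- fiberwise over rowsOf
  have hfiber := Finset.card_eq_sum_card_fiberwise
    (s := univ.filter (fun C : Finset (Fin m × Fin n) => C ∈ Cmn m n ∧
      rowsOf m n hn C ⊆ above))
    (t := above.powerset) (f := fun C => rowsOf m n hn C)
    (fun C hC => Finset.mem_powerset.mpr (Finset.mem_filter.mp hC).2.2)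
  rw [hfiber]
  -- each fiber equals the clean fiber
  have hclean : ∀ B ∈ above.powerset,
      ((univ.filter (fun C : Finset (Fin m × Fin n) => C ∈ Cmn m n ∧
        rowsOf m n hn C ⊆ above)).filter (fun C => rowsOf m n hn C = B)).card
      = (univ.filter (fun C : Finset (Fin m × Fin n) => C ∈ Cmn m n ∧
          rowsOf m n hn C = B)).card := by
    intro B hB
    congr 1
    ext C
    simp only [Finset.mem_filter, Finset.mem_univ, true_and]
    constructor
    · rintro ⟨⟨h1, _⟩, h3⟩
      exact ⟨h1, h3⟩
    · rintro ⟨h1, h2⟩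
      exact ⟨⟨h1, h2 ▸ Finset.mem_powerset.mp hB⟩, h2⟩
  rw [Finset.sum_congr rfl hclean]
  -- group by cardinality
  rw [Finset.powerset_card_disjiUnion]
  refine (Finset.sum_disjiUnion _ _ _).trans ?_
  have hterm : ∀ j ∈ Finset.range (above.card + 1),
      ∑ B ∈ Finset.powersetCard j above,
        (univ.filter (fun C : Finset (Fin m × Fin n) => C ∈ Cmn m n ∧
          rowsOf m n hn C = B)).card
      = (if j = 0 then 0 else Nat.choose (m - i) j * fval m n hn j) := by
    intro j hj
    by_cases hj0 : j = 0
    · subst hj0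
      rw [Finset.powersetCard_zero, Finset.sum_singleton, if_pos rfl]
      rw [Finset.card_eq_zero, Finset.filter_eq_empty_iff]
      rintro C _ ⟨hC, hrows⟩
      exact Finset.not_nonempty_empty (hrows ▸ rowsOf_nonempty hC)
    · rw [if_neg hj0]
      have : ∀ B ∈ Finset.powersetCard j above,
          (univ.filter (fun C : Finset (Fin m × Fin n) => C ∈ Cmn m n ∧
            rowsOf m n hn C = B)).card = fval m n hn j := by
        intro B hB
        obtain ⟨hBsub, hBcard⟩ := Finset.mem_powersetCard.mp hB
        rw [← hBcard]
        exact fiber_card hn B (Finset.card_pos.mp (by omega))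
      rw [Finset.sum_congr rfl this, Finset.sum_const, smul_eq_mul,
        Finset.card_powersetCard, habove_card]
  rw [Finset.sum_congr rfl hterm]
  -- drop the zero term and convert range to Icc
  rw [habove_card]
  have hsub : Finset.Icc 1 (m - i) ⊆ Finset.range (m - i + 1) := by
    intro x hx
    rw [Finset.mem_Icc] at hx
    rw [Finset.mem_range]
    omega
  have hzero : ∀ x ∈ Finset.range (m - i + 1), x ∉ Finset.Icc 1 (m - i) →
      (if x = 0 then 0 else Nat.choose (m - i) x * fval m n hn x) = 0 := by
    intro x hx1 hx2
    rw [Finset.mem_range] at hx1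
    rw [Finset.mem_Icc] at hx2
    have : x = 0 := by omega
    subst this
    rfl
  rw [← Finset.sum_subset hsub hzero]
  apply Finset.sum_congr rfl
  intro x hx
  rw [Finset.mem_Icc] at hx
  rw [if_neg (by omega)]
section bijection
variable {m n : ℕ}

def upF (m n : ℕ) (p : Fin m × Fin n) : Fin m × Fin (n + 1) :=
  (p.1, ⟨p.2.1, Nat.lt_succ_of_lt p.2.2⟩)

def downF (m n : ℕ) (hn : 0 < n) (p : Fin m × Fin (n + 1)) : Fin m × Fin n :=
  (p.1, ⟨min p.2.1 (n - 1), by omega⟩)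

lemma down_up (hn : 0 < n) (p : Fin m × Fin n) : downF m n hn (upF m n p) = p := by
  unfold upF downF
  refine Prod.ext rfl (Fin.ext ?_)
  have := p.2.2
  simp only []
  omega

lemma upF_ne_last (p : Fin m × Fin n) :
    (upF m n p).2 ≠ (⟨n + 1 - 1, by omega⟩ : Fin (n + 1)) := by
  intro h
  have := congrArg Fin.val h
  have h2 := p.2.2
  simp only [upF] at this
  omega

lemma up_down (hn : 0 < n) (p : Fin m × Fin (n + 1))
    (hp : p.2 ≠ (⟨n + 1 - 1, by omega⟩ : Fin (n + 1))) : upF m n (downF m n hn p) = p := by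
  unfold upF downF
  refine Prod.ext rfl (Fin.ext ?_)
  have h2 := p.2.2
  have h3 : p.2.1 ≠ n + 1 - 1 := fun h => hp (Fin.ext h)
  simp only []
  omega

/-- removing the last column from a connected set (hitting all columns) keeps it
connected. -/
lemma trim_conn (hn : 0 < n) {C : Finset (Fin m × Fin (n + 1))} (hC : C ∈ Cmn m (n + 1)) :
    ConnOn (KP m (n + 1))
      (C.filter (fun p => p.2 ≠ (⟨n + 1 - 1, by omega⟩ : Fin (n + 1)))) := by
  set L : Fin (n + 1) := (⟨n + 1 - 1, by omega⟩ : Fin (n + 1)) with hL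
  set sl : Fin (n + 1) := (⟨n - 1, by omega⟩ : Fin (n + 1)) with hsl
  have hslne : sl ≠ L := by
    intro h
    have := congrArg Fin.val h
    rw [hsl, hL] at this
    simp only [] at this
    omega
  obtain ⟨⟨hne, hconn⟩, hcols⟩ := mem_Cmn_iff.mp hC
  obtain ⟨p₀, hp₀⟩ := hcols sl
  rw [Finset.mem_filter] at hp₀
  set b₀ : Fin m := p₀.1 with hb₀
  have hb₀sl : ((b₀, sl) : Fin m × Fin (n + 1)) ∈ C := by
    rw [show ((b₀, sl) : Fin m × Fin (n + 1)) = p₀ from Prod.ext rfl hp₀.2.symm]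
    exact hp₀.1
  set D := C.filter (fun p => p.2 ≠ L) with hD
  set π : Fin m × Fin (n + 1) → Fin m × Fin (n + 1) :=
    fun p => if p.2 = L then (b₀, sl) else p with hπ
  have hπmem : ∀ p ∈ C, π p ∈ D := by
    intro p hp
    simp only [hπ, hD]
    by_cases h : p.2 = L
    · rw [if_pos h]
      exact Finset.mem_filter.mpr ⟨hb₀sl, hslne⟩
    · rw [if_neg h]
      exact Finset.mem_filter.mpr ⟨hp, h⟩
  have hπfix : ∀ p ∈ D, π p = p := by
    intro p hp
    rw [hD, Finset.mem_filter] at hp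
    simp only [hπ]
    rw [if_neg hp.2]
  have hadj : ∀ a ∈ C, ∀ b ∈ C, (KP m (n + 1)).Adj a b →
      (KP m (n + 1)).Adj (π a) (π b) ∨ π a = π b := by
    intro a _ b _ hab
    by_cases ha : a.2 = L <;> by_cases hb : b.2 = L
    · right
      simp only [hπ]
      rw [if_pos ha, if_pos hb]
    · -- a in last column, b not
      have hbsl : b.2 = sl := by
        rw [KP_adj] at hab
        apply Fin.ext
        rcases hab with ⟨_, h2⟩ | ⟨_, h2⟩
        · exact absurd (Fin.ext h2.symm : b.2 = a.2) (fun h => hb (h.trans ha))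
        · have hav : a.2.1 = n + 1 - 1 := congrArg Fin.val ha
          have hbv : b.2.1 < n + 1 := b.2.2
          have hbv2 : b.2.1 ≠ n + 1 - 1 := fun h => hb (Fin.ext (h.trans (congrArg Fin.val hL.symm ▸ rfl)))
          show b.2.1 = n - 1
          omega
      simp only [hπ]
      rw [if_pos ha, if_neg hb]
      by_cases hb₀b : b₀ = b.1
      · right
        exact Prod.ext hb₀b hbsl.symm
      · left
        rw [KP_adj]
        exact Or.inl ⟨hb₀b, by rw [hbsl]⟩
    · -- b in last column, a not
      have hasl : a.2 = sl := by
        rw [KP_adj] at hab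
        apply Fin.ext
        rcases hab with ⟨_, h2⟩ | ⟨_, h2⟩
        · exact absurd (Fin.ext h2 : a.2 = b.2) (fun h => ha (h.trans hb))
        · have hbv : b.2.1 = n + 1 - 1 := congrArg Fin.val hb
          have hav : a.2.1 < n + 1 := a.2.2
          have hav2 : a.2.1 ≠ n + 1 - 1 := fun h => ha (Fin.ext h)
          show a.2.1 = n - 1
          omega
      simp only [hπ]
      rw [if_neg ha, if_pos hb]
      by_cases hb₀a : a.1 = b₀
      · right
        exact Prod.ext hb₀a hasl
      · left
        rw [KP_adj]
        refine Or.inl ⟨hb₀a, by rw [hasl]⟩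
    · left
      simp only [hπ]
      rw [if_neg ha, if_neg hb]
      exact hab
  intro x hx y hy
  have hx' := Finset.mem_filter.mp hx
  have hy' := Finset.mem_filter.mp hy
  have h := hconn x hx'.1 y hy'.1
  have h2 := rtg_image π hπmem hadj h
  rwa [hπfix x hx, hπfix y hy] at h2

/-- if a connected set contains the fixed last-column set and something outside the last
column, some row of the last-column set appears in the second-to-last column. -/
lemma exit_lemma (hn : 0 < n) {C : Finset (Fin m × Fin (n + 1))}
    {x y : Fin m × Fin (n + 1)}
    (h : Relation.ReflTransGen (RelS (KP m (n + 1)) C) x y)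
    (hy : y.2 ≠ (⟨n + 1 - 1, by omega⟩ : Fin (n + 1))) :
    x.2 = (⟨n + 1 - 1, by omega⟩ : Fin (n + 1)) →
    ∃ a : Fin m, ((a, (⟨n + 1 - 1, by omega⟩ : Fin (n + 1))) : Fin m × Fin (n + 1)) ∈ C ∧
      ((a, (⟨n - 1, by omega⟩ : Fin (n + 1))) : Fin m × Fin (n + 1)) ∈ C := by
  set L : Fin (n + 1) := (⟨n + 1 - 1, by omega⟩ : Fin (n + 1)) with hL
  set sl : Fin (n + 1) := (⟨n - 1, by omega⟩ : Fin (n + 1)) with hsl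
  induction h using Relation.ReflTransGen.head_induction_on with
  | refl => exact fun hx => absurd hx hy
  | @head a c hac hcy ih =>
      intro hx
      by_cases hc : c.2 = L
      · exact ih hc
      · -- the edge a-c exits the last column
        have hcsl : c.2 = sl := by
          have hadj := hac.2.2
          rw [KP_adj] at hadj
          apply Fin.ext
          rcases hadj with ⟨_, h2⟩ | ⟨_, h2⟩
          · exact absurd (Fin.ext h2.symm : c.2 = a.2) (fun h => hc (h.trans hx))
          · have hav : a.2.1 = n + 1 - 1 := congrArg Fin.val hx
            have hcv : c.2.1 < n + 1 := c.2.2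
            have hcv2 : c.2.1 ≠ n + 1 - 1 := fun h => hc (Fin.ext h)
            show c.2.1 = n - 1
            omega
        have hfst : a.1 = c.1 := by
          have hadj := hac.2.2
          rw [KP_adj] at hadj
          rcases hadj with ⟨_, h2⟩ | ⟨h1, _⟩
          · exfalso
            apply hc
            rw [← hx]
            exact Fin.ext h2.symm
          · exact h1
        refine ⟨a.1, ?_, ?_⟩
        · rw [show ((a.1, L) : Fin m × Fin (n + 1)) = a from Prod.ext rfl hx.symm]
          exact hac.1
        · rw [hfst, show ((c.1, sl) : Fin m × Fin (n + 1)) = c from Prod.ext rfl hcsl.symm]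
          exact hac.2.1

end bijection
section bij2
variable {m n : ℕ}

lemma upF_inj (hn : 0 < n) : Function.Injective (upF m n) := by
  intro a b h
  rw [← down_up hn a, ← down_up hn b, h]

lemma mem_trim_image {hn : 0 < n} {C : Finset (Fin m × Fin (n + 1))} {q : Fin m × Fin n} :
    q ∈ (C.filter (fun p => p.2 ≠ (⟨n + 1 - 1, by omega⟩ : Fin (n + 1)))).image
      (downF m n hn) ↔ upF m n q ∈ C := by
  simp only [Finset.mem_image, Finset.mem_filter]
  constructor
  · rintro ⟨p, ⟨hp, hpne⟩, rfl⟩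
    rwa [up_down hn p hpne]
  · intro h
    exact ⟨upF m n q, ⟨h, upF_ne_last q⟩, down_up hn q⟩

lemma upF_adj {q r : Fin m × Fin n} (h : (KP m n).Adj q r) :
    (KP m (n + 1)).Adj (upF m n q) (upF m n r) := by
  rw [KP_adj] at h ⊢
  rcases h with ⟨h1, h2⟩ | ⟨h1, h2⟩
  · exact Or.inl ⟨h1, h2⟩
  · exact Or.inr ⟨h1, h2⟩

lemma downF_adj (hn : 0 < n) {a b : Fin m × Fin (n + 1)} (ha : a.2.1 < n) (hb : b.2.1 < n)
    (h : (KP m (n + 1)).Adj a b) : (KP m n).Adj (downF m n hn a) (downF m n hn b) := by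
  rw [KP_adj] at h ⊢
  have hda : (downF m n hn a).2.1 = a.2.1 := by
    show min a.2.1 (n - 1) = a.2.1
    omega
  have hdb : (downF m n hn b).2.1 = b.2.1 := by
    show min b.2.1 (n - 1) = b.2.1
    omega
  rcases h with ⟨h1, h2⟩ | ⟨h1, h2⟩
  · refine Or.inl ⟨h1, ?_⟩
    rw [hda, hdb]
    exact h2
  · refine Or.inr ⟨h1, ?_⟩
    rw [hda, hdb]
    exact h2

lemma ne_last_lt {p : Fin m × Fin (n + 1)}
    (hp : p.2 ≠ (⟨n + 1 - 1, by omega⟩ : Fin (n + 1))) : p.2.1 < n := by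
  have h1 := p.2.2
  have h2 : p.2.1 ≠ n + 1 - 1 := fun h => hp (Fin.ext h)
  omega

set_option maxHeartbeats 1000000 in
lemma good_eq (m n i : ℕ) (hm : 0 < m) (hi : 1 ≤ i) (hn : 0 < n) :
    fval m (n + 1) (by omega) i =
    (univ.filter (fun C' : Finset (Fin m × Fin n) => C' ∈ Cmn m n ∧
      ∃ a : Fin m, a.1 < i ∧ (a, (⟨n - 1, Nat.sub_lt hn Nat.one_pos⟩ : Fin n)) ∈ C')).card := by
  have hL : ∀ (h : n + 1 - 1 < n + 1), (⟨n + 1 - 1, h⟩ : Fin (n + 1)) =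
      (⟨n + 1 - 1, by omega⟩ : Fin (n + 1)) := fun _ => rfl
  -- membership in the fixed last-column set
  have mem_A : ∀ p : Fin m × Fin (n + 1),
      p ∈ (Finset.univ.filter (fun q : Fin m => q.1 < i)).image
        (fun q => (q, (⟨n + 1 - 1, by omega⟩ : Fin (n + 1)))) ↔
      p.1.1 < i ∧ p.2 = (⟨n + 1 - 1, by omega⟩ : Fin (n + 1)) := by
    intro p
    simp only [Finset.mem_image, Finset.mem_filter, Finset.mem_univ, true_and]
    constructor
    · rintro ⟨q, hq, rfl⟩
      exact ⟨hq, rfl⟩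
    · rintro ⟨h1, h2⟩
      exact ⟨p.1, h1, Prod.ext rfl h2.symm⟩
  unfold fval
  rw [ncard_setOf]
  refine Finset.card_bij'
    (fun C _ => (C.filter (fun p => p.2 ≠ (⟨n + 1 - 1, by omega⟩ : Fin (n + 1)))).image
      (downF m n hn))
    (fun C' _ => C'.image (upF m n) ∪
      (Finset.univ.filter (fun q : Fin m => q.1 < i)).image
        (fun q => (q, (⟨n + 1 - 1, by omega⟩ : Fin (n + 1))))) ?_ ?_ ?_ ?_
  -- forward membership
  · intro C hC
    simp only [Finset.mem_filter] at hC
    obtain ⟨-, hCmem, hCfil⟩ := hC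
    simp only [Finset.mem_filter]
    obtain ⟨⟨hne, hconn⟩, hcols⟩ := mem_Cmn_iff.mp hCmem
    have htrim := trim_conn hn hCmem
    -- connectivity of the image
    have himconn : ConnOn (KP m n)
        ((C.filter (fun p => p.2 ≠ (⟨n + 1 - 1, by omega⟩ : Fin (n + 1)))).image
          (downF m n hn)) := by
      intro x hx y hy
      rw [Finset.mem_image] at hx hy
      obtain ⟨px, hpx, rfl⟩ := hx
      obtain ⟨py, hpy, rfl⟩ := hy
      refine rtg_image (downF m n hn) (fun z hz => Finset.mem_image_of_mem _ hz) ?_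
        (htrim px hpx py hpy)
      intro a ha b hb hab
      rw [Finset.mem_filter] at ha hb
      exact Or.inl (downF_adj hn (ne_last_lt ha.2) (ne_last_lt hb.2) hab)
    -- columns of the image
    have himcols : ∀ j : Fin n,
        (((C.filter (fun p => p.2 ≠ (⟨n + 1 - 1, by omega⟩ : Fin (n + 1)))).image
          (downF m n hn)).filter (fun p => p.2 = j)).Nonempty := by
      intro j
      obtain ⟨p, hp⟩ := hcols ⟨j.1, by omega⟩
      rw [Finset.mem_filter] at hp
      refine ⟨(p.1, j), Finset.mem_filter.mpr ⟨?_, rfl⟩⟩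
      rw [mem_trim_image]
      have : upF m n (p.1, j) = p := by
        refine Prod.ext rfl (Fin.ext ?_)
        show j.1 = p.2.1
        rw [hp.2]
      rw [this]
      exact hp.1
    refine ⟨Finset.mem_univ _, mem_Cmn_iff.mpr ⟨⟨?_, himconn⟩, himcols⟩, ?_⟩
    · obtain ⟨q, hq⟩ := himcols ⟨n - 1, by omega⟩
      exact ⟨q, Finset.mem_filter.mp hq |>.1⟩
    -- the exit row
    · have hx₀A : ((⟨0, hm⟩ : Fin m), (⟨n + 1 - 1, by omega⟩ : Fin (n + 1))) ∈
          (Finset.univ.filter (fun q : Fin m => q.1 < i)).image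
            (fun q => (q, (⟨n + 1 - 1, by omega⟩ : Fin (n + 1)))) :=
        (mem_A _).mpr ⟨show (0 : ℕ) < i by omega, rfl⟩
      have hx₀C : ((⟨0, hm⟩ : Fin m), (⟨n + 1 - 1, by omega⟩ : Fin (n + 1))) ∈ C := by
        have := hCfil ▸ hx₀A
        exact (Finset.mem_filter.mp this).1
      obtain ⟨y₀, hy₀⟩ := hcols ⟨0, by omega⟩
      rw [Finset.mem_filter] at hy₀
      have hy₀ne : y₀.2 ≠ (⟨n + 1 - 1, by omega⟩ : Fin (n + 1)) := by
        intro h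
        have h1 := congrArg Fin.val (hy₀.2.symm.trans h)
        simp only [] at h1
        omega
      have hrtg := hconn _ hx₀C y₀ hy₀.1
      obtain ⟨a, haL, hasl⟩ := exit_lemma hn hrtg hy₀ne rfl
      have hai : a.1 < i := by
        have : ((a, (⟨n + 1 - 1, by omega⟩ : Fin (n + 1))) : Fin m × Fin (n + 1)) ∈
            C.filter (fun p => p.2 = (⟨n + 1 - 1, by omega⟩ : Fin (n + 1))) :=
          Finset.mem_filter.mpr ⟨haL, rfl⟩
        rw [hCfil] at this
        exact ((mem_A _).mp this).1
      refine ⟨a, hai, ?_⟩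
      rw [mem_trim_image]
      have : upF m n (a, (⟨n - 1, Nat.sub_lt hn Nat.one_pos⟩ : Fin n)) =
          (a, (⟨n - 1, by omega⟩ : Fin (n + 1))) := rfl
      rw [this]
      exact hasl
  -- backward membership
  · intro C' hC'
    simp only [Finset.mem_filter] at hC'
    obtain ⟨-, hC'mem, a₀, ha₀i, ha₀mem⟩ := hC'
    obtain ⟨⟨hne', hconn'⟩, hcols'⟩ := mem_Cmn_iff.mp hC'mem
    simp only [Finset.mem_filter]
    have hfil : (C'.image (upF m n) ∪
        (Finset.univ.filter (fun q : Fin m => q.1 < i)).image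
          (fun q => (q, (⟨n + 1 - 1, by omega⟩ : Fin (n + 1))))).filter
          (fun p => p.2 = (⟨n + 1 - 1, by omega⟩ : Fin (n + 1))) =
        (Finset.univ.filter (fun q : Fin m => q.1 < i)).image
          (fun q => (q, (⟨n + 1 - 1, by omega⟩ : Fin (n + 1)))) := by
      ext p
      rw [Finset.mem_filter, Finset.mem_union]
      constructor
      · rintro ⟨h1 | h1, h2⟩
        · exfalso
          rw [Finset.mem_image] at h1
          obtain ⟨q, _, rfl⟩ := h1
          exact upF_ne_last q h2
        · exact h1
      · intro h
        exact ⟨Or.inr h, ((mem_A _).mp h).2⟩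
    have hconnU : ConnOn (KP m (n + 1)) (C'.image (upF m n) ∪
        (Finset.univ.filter (fun q : Fin m => q.1 < i)).image
          (fun q => (q, (⟨n + 1 - 1, by omega⟩ : Fin (n + 1))))) := by
      refine conn_union ?_ (column_conn (j := (⟨n + 1 - 1, by omega⟩ : Fin (n + 1)))
          (fun p hp => ((mem_A _).mp hp).2))
        (Finset.mem_image_of_mem (upF m n) ha₀mem)
        (show ((a₀, (⟨n + 1 - 1, by omega⟩ : Fin (n + 1))) : Fin m × Fin (n + 1)) ∈ _ from
          (mem_A _).mpr ⟨ha₀i, rfl⟩) ?_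
      · intro x hx y hy
        rw [Finset.mem_image] at hx hy
        obtain ⟨px, hpx, rfl⟩ := hx
        obtain ⟨py, hpy, rfl⟩ := hy
        refine rtg_image (upF m n) (fun z hz => Finset.mem_image_of_mem _ hz) ?_
          (hconn' px hpx py hpy)
        intro a _ b _ hab
        exact Or.inl (upF_adj hab)
      · rw [KP_adj]
        refine Or.inr ⟨rfl, Or.inl ?_⟩
        show (n - 1) + 1 = n + 1 - 1
        omega
    have hcolsU : ∀ j : Fin (n + 1), ((C'.image (upF m n) ∪
        (Finset.univ.filter (fun q : Fin m => q.1 < i)).image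
          (fun q => (q, (⟨n + 1 - 1, by omega⟩ : Fin (n + 1))))).filter
          (fun p => p.2 = j)).Nonempty := by
      intro j
      by_cases hj : j = (⟨n + 1 - 1, by omega⟩ : Fin (n + 1))
      · subst hj
        have hxA : (((⟨0, hm⟩ : Fin m), (⟨n + 1 - 1, by omega⟩ : Fin (n + 1))) :
            Fin m × Fin (n + 1)) ∈
            (Finset.univ.filter (fun q : Fin m => q.1 < i)).image
              (fun q => (q, (⟨n + 1 - 1, by omega⟩ : Fin (n + 1)))) :=
          (mem_A _).mpr ⟨show (0 : ℕ) < i by omega, rfl⟩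
        exact ⟨((⟨0, hm⟩ : Fin m), (⟨n + 1 - 1, by omega⟩ : Fin (n + 1))),
          Finset.mem_filter.mpr ⟨Finset.mem_union_right _ hxA, rfl⟩⟩
      · have hjlt : j.1 < n := by
          have h1 := j.2
          have h2 : j.1 ≠ n + 1 - 1 := fun h => hj (Fin.ext h)
          omega
        obtain ⟨q, hq⟩ := hcols' ⟨j.1, hjlt⟩
        rw [Finset.mem_filter] at hq
        refine ⟨upF m n q, Finset.mem_filter.mpr
          ⟨Finset.mem_union_left _ (Finset.mem_image_of_mem _ hq.1), ?_⟩⟩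
        refine Fin.ext ?_
        show q.2.1 = j.1
        rw [hq.2]
    refine ⟨Finset.mem_univ _, mem_Cmn_iff.mpr ⟨⟨?_, hconnU⟩, hcolsU⟩, hfil⟩
    · exact ⟨upF m n (a₀, ⟨n - 1, by omega⟩),
        Finset.mem_union_left _ (Finset.mem_image_of_mem _ ha₀mem)⟩
  -- left inverse
  · intro C hC
    simp only [Finset.mem_filter] at hC
    obtain ⟨-, hCmem, hCfil⟩ := hC
    have him : ((C.filter (fun p => p.2 ≠ (⟨n + 1 - 1, by omega⟩ : Fin (n + 1)))).image
        (downF m n hn)).image (upF m n) =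
        C.filter (fun p => p.2 ≠ (⟨n + 1 - 1, by omega⟩ : Fin (n + 1))) := by
      ext r
      rw [Finset.mem_image]
      constructor
      · rintro ⟨q, hq, rfl⟩
        rw [mem_trim_image] at hq
        exact Finset.mem_filter.mpr ⟨hq, upF_ne_last q⟩
      · intro hr
        rw [Finset.mem_filter] at hr
        refine ⟨downF m n hn r, ?_, up_down hn r hr.2⟩
        rw [mem_trim_image, up_down hn r hr.2]
        exact hr.1
    show ((C.filter (fun p => p.2 ≠ (⟨n + 1 - 1, by omega⟩ : Fin (n + 1)))).image
        (downF m n hn)).image (upF m n) ∪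
        (Finset.univ.filter (fun q : Fin m => q.1 < i)).image
          (fun q => (q, (⟨n + 1 - 1, by omega⟩ : Fin (n + 1)))) = C
    rw [him, ← hCfil]
    rw [Finset.union_comm]
    exact Finset.filter_union_filter_not_eq _ C
  -- right inverse
  · intro C' hC'
    show ((C'.image (upF m n) ∪
        (Finset.univ.filter (fun q : Fin m => q.1 < i)).image
          (fun q => (q, (⟨n + 1 - 1, by omega⟩ : Fin (n + 1))))).filter
        (fun p => p.2 ≠ (⟨n + 1 - 1, by omega⟩ : Fin (n + 1)))).image (downF m n hn) = C'
    ext q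
    rw [mem_trim_image, Finset.mem_union]
    constructor
    · rintro (h | h)
      · rw [Finset.mem_image] at h
        obtain ⟨r, hr, hru⟩ := h
        rwa [← upF_inj hn hru]
      · exact absurd ((mem_A _).mp h).2 (upF_ne_last q)
    · intro h
      exact Or.inl (Finset.mem_image_of_mem _ h)

end bij2
lemma fval_rec (m n i : ℕ) (hm : 0 < m) (hi : 1 ≤ i) (him : i ≤ m) (hn : 0 < n) :
    fval m (n + 1) (by omega) i +
      ∑ j ∈ Finset.Icc 1 (m - i), Nat.choose (m - i) j * fval m n hn j =
    (Cmn m n).ncard := by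
  have htot : (Cmn m n).ncard =
      (univ.filter (fun C : Finset (Fin m × Fin n) => C ∈ Cmn m n)).card :=
    ncard_setOf (fun C : Finset (Fin m × Fin n) => C ∈ Cmn m n)
  have hdecomp : (univ.filter (fun C : Finset (Fin m × Fin n) => C ∈ Cmn m n)) =
      (univ.filter (fun C : Finset (Fin m × Fin n) => C ∈ Cmn m n ∧
        ∃ a : Fin m, a.1 < i ∧ (a, (⟨n - 1, Nat.sub_lt hn Nat.one_pos⟩ : Fin n)) ∈ C)) ∪
      (univ.filter (fun C : Finset (Fin m × Fin n) => C ∈ Cmn m n ∧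
        ¬ ∃ a : Fin m, a.1 < i ∧ (a, (⟨n - 1, Nat.sub_lt hn Nat.one_pos⟩ : Fin n)) ∈ C)) := by
    ext C
    simp only [Finset.mem_filter, Finset.mem_union, Finset.mem_univ, true_and]
    constructor
    · intro h
      by_cases hp : ∃ a : Fin m, a.1 < i ∧ (a, (⟨n - 1, Nat.sub_lt hn Nat.one_pos⟩ : Fin n)) ∈ C
      · exact Or.inl ⟨h, hp⟩
      · exact Or.inr ⟨h, hp⟩
    · rintro (⟨h, -⟩ | ⟨h, -⟩) <;> exact h
  have hdisj : Disjoint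
      (univ.filter (fun C : Finset (Fin m × Fin n) => C ∈ Cmn m n ∧
        ∃ a : Fin m, a.1 < i ∧ (a, (⟨n - 1, Nat.sub_lt hn Nat.one_pos⟩ : Fin n)) ∈ C))
      (univ.filter (fun C : Finset (Fin m × Fin n) => C ∈ Cmn m n ∧
        ¬ ∃ a : Fin m, a.1 < i ∧ (a, (⟨n - 1, Nat.sub_lt hn Nat.one_pos⟩ : Fin n)) ∈ C)) := by
    rw [Finset.disjoint_left]
    intro C hC1 hC2
    simp only [Finset.mem_filter] at hC1 hC2
    exact hC2.2.2 hC1.2.2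
  rw [htot, hdecomp, Finset.card_union_of_disjoint hdisj,
    good_eq m n i hm hi hn, bad_sum m n i hi him hn]


/-- For any `m ≥ 1` and `1 ≤ i ≤ m`: `f_{m,1}^i = 1`, and for every
`n ≥ 2`, `f_{m,n}^i = |C_{m,n−1}| − Σ_{j=1}^{m−i} C(m−i,j)·f_{m,n−1}^j`. -/
theorem statement9 (m i : ℕ) (hm : 0 < m) (hi : 1 ≤ i) (him : i ≤ m) :
    fval m 1 one_pos i = 1 ∧
    ∀ n : ℕ, (hn : 2 ≤ n) →
      (fval m n (by omega) i : ℤ) =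
        ((Cmn m (n - 1)).ncard : ℤ) -
          ∑ j ∈ Finset.Icc 1 (m - i),
            (Nat.choose (m - i) j : ℤ) * (fval m (n - 1) (by omega) j : ℤ) := by
  refine ⟨fval_base m i hm hi him, ?_⟩
  intro n hn
  obtain ⟨k, rfl⟩ : ∃ k, n = k + 1 := ⟨n - 1, by omega⟩
  have hk : 0 < k := by omega
  have hrec := fval_rec m k i hm hi him hk
  rw [eq_sub_iff_add_eq]
  have hcast := congrArg (fun x : ℕ => (x : ℤ)) hrec
  push_cast at hcast
  exact_mod_cast hcast
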